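/- Let n ≥ 2 and let A be an n×n row-stochastic strictly diagonally dominant positive real matrix. Then K_max − K_min ≤ 2n·log₂(n)/σ_min(A). -/

import Mathlib

open Matrix Finset Real

noncomputable def rowEntropy {n : ℕ} (A : Matrix (Fin n) (Fin n) ℝ) (i : Fin n) : ℝ :=
  -∑ k, A i k * Real.logb 2 (A i k)

noncomputable def Kvec {n : ℕ} (A : Matrix (Fin n) (Fin n) ℝ) (j : Fin n) : ℝ :=
  ∑ i, A⁻¹ j i * rowEntropy A i

noncomputable def Kmax {n : ℕ} (A : Matrix (Fin n) (Fin n) ℝ) : ℝ := ⨆ j, Kvec A j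

noncomputable def Kmin {n : ℕ} (A : Matrix (Fin n) (Fin n) ℝ) : ℝ := ⨅ j, Kvec A j

def IsPmf {n : ℕ} (p : Fin n → ℝ) : Prop := (∀ i, 0 ≤ p i) ∧ ∑ i, p i = 1

noncomputable def mutualInfo {n : ℕ} (A : Matrix (Fin n) (Fin n) ℝ) (p : Fin n → ℝ) : ℝ :=
  -(∑ j, Aᵀ.mulVec p j * Real.logb 2 (Aᵀ.mulVec p j))
    + ∑ i, ∑ j, p i * A i j * Real.logb 2 (A i j)

noncomputable def capacity {n : ℕ} (A : Matrix (Fin n) (Fin n) ℝ) : ℝ :=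
  sSup {x : ℝ | ∃ p : Fin n → ℝ, IsPmf p ∧ mutualInfo A p = x}

noncomputable def qStar {n : ℕ} (A : Matrix (Fin n) (Fin n) ℝ) (j : Fin n) : ℝ :=
  (2 : ℝ) ^ (-Kvec A j) / ∑ i, (2 : ℝ) ^ (-Kvec A i)

noncomputable def pStar {n : ℕ} (A : Matrix (Fin n) (Fin n) ℝ) : Fin n → ℝ :=
  (A⁻¹)ᵀ.mulVec (qStar A)

noncomputable def Ubound {n : ℕ} (A : Matrix (Fin n) (Fin n) ℝ) : ℝ :=
  -(∑ j, qStar A j * Real.logb 2 (qStar A j))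
    + ∑ i, ∑ j, pStar A i * A i j * Real.logb 2 (A i j)

noncomputable def cmin {n : ℕ} (A : Matrix (Fin n) (Fin n) ℝ) : ℝ :=
  ⨅ i, A i i / ∑ j ∈ Finset.univ.erase i, |A i j|

noncomputable def Hmax {n : ℕ} (A : Matrix (Fin n) (Fin n) ℝ) : ℝ := ⨆ i, rowEntropy A i

noncomputable def sigmaMin {n : ℕ} (A : Matrix (Fin n) (Fin n) ℝ) : ℝ :=
  Real.sqrt (⨅ i, (show (Aᵀ * A).IsHermitian by
    simpa [Matrix.conjTranspose_eq_transpose_of_trivial] using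
      Matrix.isHermitian_conjTranspose_mul_self A).eigenvalues i)

def RowStochastic {n : ℕ} (A : Matrix (Fin n) (Fin n) ℝ) : Prop :=
  (∀ i j, 0 ≤ A i j) ∧ ∀ i, ∑ j, A i j = 1

def SDDPos {n : ℕ} (A : Matrix (Fin n) (Fin n) ℝ) : Prop :=
  (∀ i j, 0 < A i j) ∧ ∀ i, ∑ j ∈ Finset.univ.erase i, A i j < A i i

/-! ### Auxiliary lemmas -/

lemma rayleigh_min_aux {n : ℕ} [Nonempty (Fin n)] (A : Matrix (Fin n) (Fin n) ℝ)
    (x : Fin n → ℝ) :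
    (⨅ i, (Matrix.isHermitian_conjTranspose_mul_self A).eigenvalues i) * (x ⬝ᵥ x)
      ≤ (A *ᵥ x) ⬝ᵥ (A *ᵥ x) := by
  have key : ∀ (M : Matrix (Fin n) (Fin n) ℝ) (v w : Fin n → ℝ),
      (Mᵀ *ᵥ v) ⬝ᵥ w = v ⬝ᵥ (M *ᵥ w) := by
    intro M v w; rw [Matrix.mulVec_transpose, ← Matrix.dotProduct_mulVec]
  set hB := Matrix.isHermitian_conjTranspose_mul_self A with hBdef
  set U : Matrix (Fin n) (Fin n) ℝ := (hB.eigenvectorUnitary : Matrix (Fin n) (Fin n) ℝ) with hU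
  have hUU : U * Uᵀ = 1 := (Matrix.mem_unitaryGroup_iff).mp hB.eigenvectorUnitary.2
  have hstar : star U = Uᵀ := rfl
  set y : Fin n → ℝ := Uᵀ *ᵥ x with hy
  have h1 : (A *ᵥ x) ⬝ᵥ (A *ᵥ x) = x ⬝ᵥ ((Aᴴ * A) *ᵥ x) := by
    rw [← Matrix.mulVec_mulVec, Matrix.dotProduct_mulVec x, Matrix.vecMul_conjTranspose]
    simp
  have h2 : y ⬝ᵥ y = x ⬝ᵥ x := by
    have h := key U x y
    rw [← hy] at h
    rw [h, hy, Matrix.mulVec_mulVec, hUU, Matrix.one_mulVec]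
  have h3 : x ⬝ᵥ ((Aᴴ * A) *ᵥ x) = ∑ i, hB.eigenvalues i * (y i)^2 := by
    conv_lhs => rw [hB.spectral_theorem, Unitary.conjStarAlgAut_apply, hstar]
    rw [← Matrix.mulVec_mulVec, ← Matrix.mulVec_mulVec, ← key U x, ← hy]
    simp only [dotProduct, Matrix.mulVec_diagonal, Function.comp_apply]
    exact Finset.sum_congr rfl fun i _ => by simp [sq]; ring
  rw [h1, h3, ← h2]
  have hbdd : BddBelow (Set.range hB.eigenvalues) := Set.Finite.bddBelow (Set.finite_range _)
  have h4 : (⨅ i, hB.eigenvalues i) * (y ⬝ᵥ y) = ∑ i, (⨅ i, hB.eigenvalues i) * (y i)^2 := by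
    simp [dotProduct, Finset.mul_sum, sq]
  rw [h4]
  exact Finset.sum_le_sum fun i _ =>
    mul_le_mul_of_nonneg_right (ciInf_le hbdd i) (sq_nonneg _)

lemma entropy_abs_le_aux {n : ℕ} (hn : 2 ≤ n) (p : Fin n → ℝ) (hp : ∀ k, 0 < p k)
    (hs : ∑ k, p k = 1) : |(-∑ k, p k * Real.logb 2 (p k))| ≤ Real.logb 2 n := by
  have hlog2 : (0:ℝ) < Real.log 2 := Real.log_pos one_lt_two
  have hn0 : (0:ℝ) < n := by
    have : 0 < n := by omega
    exact_mod_cast this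
  have hlogn : 0 ≤ Real.log n := Real.log_nonneg (by
    have : (1:ℕ) ≤ n := by omega
    exact_mod_cast this)
  have hple : ∀ k, p k ≤ 1 := by
    intro k
    calc p k ≤ ∑ j, p j := Finset.single_le_sum (fun j _ => (hp j).le) (Finset.mem_univ k)
    _ = 1 := hs
  have hS1 : ∑ k, p k * Real.log (p k) ≤ 0 :=
    Finset.sum_nonpos fun k _ =>
      mul_nonpos_of_nonneg_of_nonpos (hp k).le (Real.log_nonpos (hp k).le (hple k))
  have hS2 : -Real.log n ≤ ∑ k, p k * Real.log (p k) := by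
    have key : ∀ k, p k - 1/n ≤ p k * Real.log (n * p k) := by
      intro k
      have hx : (0:ℝ) < (n:ℝ) * p k := mul_pos hn0 (hp k)
      have h1 := Real.log_le_sub_one_of_pos (inv_pos.mpr hx)
      rw [Real.log_inv] at h1
      have h2 : 1 - ((n:ℝ) * p k)⁻¹ ≤ Real.log ((n:ℝ) * p k) := by linarith
      have h3 := mul_le_mul_of_nonneg_left h2 (hp k).le
      have h4 : p k * (1 - ((n:ℝ) * p k)⁻¹) = p k - 1/n := by
        have hpk : p k ≠ 0 := (hp k).ne'
        field_simp
      linarith [h3, h4.symm.le]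
    have hsum : ∑ k, (p k - 1/(n:ℝ)) ≤ ∑ k, p k * Real.log ((n:ℝ) * p k) :=
      Finset.sum_le_sum fun k _ => key k
    have h5 : ∑ k, (p k - 1/(n:ℝ)) = 0 := by
      rw [Finset.sum_sub_distrib, hs]
      simp [Finset.card_univ]
      field_simp
      ring
    have h6 : ∑ k, p k * Real.log ((n:ℝ) * p k)
        = Real.log n + ∑ k, p k * Real.log (p k) := by
      have hterm : ∀ k : Fin n, p k * Real.log ((n:ℝ) * p k)
          = p k * Real.log n + p k * Real.log (p k) := by
        intro k
        rw [Real.log_mul (ne_of_gt hn0) (ne_of_gt (hp k))]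
        ring
      rw [Finset.sum_congr rfl fun k _ => hterm k, Finset.sum_add_distrib, ← Finset.sum_mul, hs,
        one_mul]
    linarith
  have hrw : ∑ k, p k * Real.logb 2 (p k) = (∑ k, p k * Real.log (p k)) / Real.log 2 := by
    rw [Finset.sum_div]
    exact Finset.sum_congr rfl fun k _ => by rw [Real.logb, mul_div_assoc]
  have hA : (∑ k, p k * Real.log (p k)) / Real.log 2 ≤ Real.log n / Real.log 2 :=
    (div_le_div_iff_of_pos_right hlog2).mpr (hS1.trans hlogn)
  have hB : (-Real.log n) / Real.log 2 ≤ (∑ k, p k * Real.log (p k)) / Real.log 2 :=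
    (div_le_div_iff_of_pos_right hlog2).mpr hS2
  rw [abs_le, hrw, Real.logb]
  rw [neg_div] at hB
  constructor <;> linarith

theorem Kmax_sub_Kmin_le_simple {n : ℕ} (hn : 2 ≤ n) (A : Matrix (Fin n) (Fin n) ℝ)
    (hst : RowStochastic A) (hA : SDDPos A) :
    Kmax A - Kmin A ≤ 2 * (n : ℝ) * Real.logb 2 (n : ℝ) / sigmaMin A := by
  haveI : Nonempty (Fin n) := ⟨⟨0, by omega⟩⟩
  have hn0 : (0:ℝ) < n := by
    have : 0 < n := by omega
    exact_mod_cast this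
  -- determinant and inverse
  have hdet : A.det ≠ 0 := by
    apply det_ne_zero_of_sum_row_lt_diag
    intro k
    have h1 : ∑ j ∈ Finset.univ.erase k, ‖A k j‖ = ∑ j ∈ Finset.univ.erase k, A k j :=
      Finset.sum_congr rfl fun j _ => by rw [Real.norm_eq_abs, abs_of_pos (hA.1 _ _)]
    rw [h1, Real.norm_eq_abs, abs_of_pos (hA.1 _ _)]
    exact hA.2 k
  have hunit : IsUnit A.det := isUnit_iff_ne_zero.mpr hdet
  have hAA : A * A⁻¹ = 1 := Matrix.mul_nonsing_inv A hunit
  -- smallest eigenvalue of AᵀA is positive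
  set eig := (Matrix.isHermitian_conjTranspose_mul_self A).eigenvalues with heig
  set lam := ⨅ i, eig i with hlamdef
  have heignn : ∀ i, 0 ≤ eig i := fun i =>
    Matrix.eigenvalues_conjTranspose_mul_self_nonneg A i
  have hprod : (∏ i, eig i : ℝ) = A.det * A.det := by
    have h := (Matrix.isHermitian_conjTranspose_mul_self A).det_eq_prod_eigenvalues
    have hdetH : Aᴴ.det = A.det := by
      rw [show Aᴴ = Aᵀ from rfl, Matrix.det_transpose]
    rw [Matrix.det_mul, hdetH] at h
    rw [heig]
    simpa using h.symm
  have hlam : 0 < lam := by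
    obtain ⟨i0, hi0⟩ := exists_eq_ciInf_of_finite (f := eig)
    rw [hlamdef, ← hi0]
    rcases (heignn i0).lt_or_eq with h | h
    · exact h
    · exfalso
      have hne : (∏ i, eig i : ℝ) ≠ 0 := by rw [hprod]; exact mul_ne_zero hdet hdet
      exact hne (Finset.prod_eq_zero (Finset.mem_univ i0) h.symm)
  -- sigmaMin
  have hsig : sigmaMin A = Real.sqrt lam := rfl
  have hsigpos : 0 < sigmaMin A := by
    rw [hsig]; exact Real.sqrt_pos.mpr hlam
  have hsigsq : sigmaMin A ^ 2 = lam := by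
    rw [hsig, Real.sq_sqrt hlam.le]
  -- column bound
  have hcol : ∀ j, lam * (∑ i, (A⁻¹ i j)^2) ≤ 1 := by
    intro j
    have h := rayleigh_min_aux A (fun i => A⁻¹ i j)
    have hAx : A *ᵥ (fun i => A⁻¹ i j) = fun k => (1 : Matrix (Fin n) (Fin n) ℝ) k j := by
      funext k
      rw [← hAA]
      simp [Matrix.mulVec, dotProduct, Matrix.mul_apply]
    rw [hAx] at h
    have h2 : (fun k => (1 : Matrix (Fin n) (Fin n) ℝ) k j) ⬝ᵥ
        (fun k => (1 : Matrix (Fin n) (Fin n) ℝ) k j) = 1 := by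
      simp [dotProduct, Matrix.one_apply]
    have h3 : (fun i => A⁻¹ i j) ⬝ᵥ (fun i => A⁻¹ i j) = ∑ i, (A⁻¹ i j)^2 := by
      simp [dotProduct, sq]
    rw [h2, h3] at h
    exact h
  -- total Frobenius bound
  have hfrob : lam * (∑ j, ∑ i, (A⁻¹ i j)^2) ≤ n := by
    rw [Finset.mul_sum]
    calc ∑ j, lam * ∑ i, (A⁻¹ i j)^2 ≤ ∑ _j : Fin n, (1:ℝ) :=
          Finset.sum_le_sum fun j _ => hcol j
    _ = n := by simp
  -- row ℓ² bound
  have hrow : ∀ j, ∑ i, (A⁻¹ j i)^2 ≤ n / lam := by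
    intro j
    have h1 : ∑ i, (A⁻¹ j i)^2 ≤ ∑ j', ∑ i, (A⁻¹ i j')^2 := by
      rw [Finset.sum_comm]
      exact Finset.single_le_sum (f := fun i => ∑ j', (A⁻¹ i j')^2)
        (fun i _ => Finset.sum_nonneg fun j' _ => sq_nonneg _) (Finset.mem_univ j)
    have h2 : ∑ j', ∑ i, (A⁻¹ i j')^2 ≤ n / lam := by
      rw [le_div_iff₀ hlam]
      linarith [hfrob]
    linarith
  -- row ℓ¹ bound
  have hl1 : ∀ j, ∑ i, |A⁻¹ j i| ≤ n / sigmaMin A := by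
    intro j
    have hcs := Finset.sum_mul_sq_le_sq_mul_sq Finset.univ (fun _ => (1:ℝ))
      (fun i => |A⁻¹ j i|)
    simp only [one_mul, one_pow, sq_abs] at hcs
    have hsq : (∑ i, |A⁻¹ j i|)^2 ≤ (n / sigmaMin A)^2 := by
      have h1 : (∑ _i : Fin n, (1:ℝ)) = n := by simp
      have h2 : (n / sigmaMin A)^2 = n * (n / lam) := by
        rw [div_pow, hsigsq]
        ring
      calc (∑ i, |A⁻¹ j i|)^2 ≤ (∑ _i : Fin n, (1:ℝ)) * ∑ i, (A⁻¹ j i)^2 := hcs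
      _ = n * ∑ i, (A⁻¹ j i)^2 := by rw [h1]
      _ ≤ n * (n / lam) := by
          exact mul_le_mul_of_nonneg_left (hrow j) hn0.le
      _ = (n / sigmaMin A)^2 := h2.symm
    have h3 := Real.sqrt_le_sqrt hsq
    rwa [Real.sqrt_sq (Finset.sum_nonneg fun i _ => abs_nonneg _),
      Real.sqrt_sq (by positivity)] at h3
  -- entropy bound
  have hL : (0:ℝ) ≤ Real.logb 2 n := Real.logb_nonneg one_lt_two (by
    have : (1:ℕ) ≤ n := by omega
    exact_mod_cast this)
  have hH : ∀ i, |rowEntropy A i| ≤ Real.logb 2 n := by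
    intro i
    exact entropy_abs_le_aux hn (A i) (fun k => hA.1 i k) (hst.2 i)
  -- bound on Kvec
  have hK : ∀ j, |Kvec A j| ≤ (n / sigmaMin A) * Real.logb 2 n := by
    intro j
    calc |Kvec A j| ≤ ∑ i, |A⁻¹ j i * rowEntropy A i| := Finset.abs_sum_le_sum_abs _ _
    _ = ∑ i, |A⁻¹ j i| * |rowEntropy A i| := by
        exact Finset.sum_congr rfl fun i _ => abs_mul _ _
    _ ≤ ∑ i, |A⁻¹ j i| * Real.logb 2 n :=
        Finset.sum_le_sum fun i _ => mul_le_mul_of_nonneg_left (hH i) (abs_nonneg _)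
    _ = (∑ i, |A⁻¹ j i|) * Real.logb 2 n := by rw [Finset.sum_mul]
    _ ≤ (n / sigmaMin A) * Real.logb 2 n := mul_le_mul_of_nonneg_right (hl1 j) hL
  -- conclude
  have hKmax : Kmax A ≤ (n / sigmaMin A) * Real.logb 2 n :=
    ciSup_le fun j => (abs_le.mp (hK j)).2
  have hKmin : -((n / sigmaMin A) * Real.logb 2 n) ≤ Kmin A :=
    le_ciInf fun j => (abs_le.mp (hK j)).1
  have heq : 2 * (n:ℝ) * Real.logb 2 n / sigmaMin A
      = (n / sigmaMin A) * Real.logb 2 n + (n / sigmaMin A) * Real.logb 2 n := by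
    ring
  rw [heq]
  have : Kmax A - Kmin A ≤ (n / sigmaMin A) * Real.logb 2 n
      - (-((n / sigmaMin A) * Real.logb 2 n)) := sub_le_sub hKmax hKmin
  linarith
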